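/- For random variables X ≥ 0 and Y ≥ 0 with X, Y independent, E[ln(1 + X/(Y+1))] = ∫_0^∞ (e^{-z}/z)(1 − E[e^{-zX}]) E[e^{-zY}] dz. -/

import Mathlib

open MeasureTheory ProbabilityTheory Real


-- ∫_0^∞ e^{-zt} dz = 1/t
lemma expInt {t : ℝ} (ht : 0 < t) : ∫ z in Set.Ioi (0:ℝ), Real.exp (-z * t) = t⁻¹ := by
  have h := integral_comp_mul_left_Ioi (fun x => Real.exp (-x)) 0 ht
  simp only [mul_zero, integral_exp_neg_Ioi, neg_zero, Real.exp_zero, smul_eq_mul, mul_one] at h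
  rw [← h]
  congr 1; ext z; ring_nf

lemma expIntOn {t : ℝ} (ht : 0 < t) :
    IntegrableOn (fun z : ℝ => Real.exp (-z * t)) (Set.Ioi 0) := by
  have := exp_neg_integrableOn_Ioi 0 ht
  refine this.congr_fun (fun z _ => by ring_nf) measurableSet_Ioi

lemma expLInt {t : ℝ} (ht : 0 < t) :
    ∫⁻ z in Set.Ioi (0:ℝ), ENNReal.ofReal (Real.exp (-z * t)) = ENNReal.ofReal t⁻¹ := by
  rw [← expInt ht, ofReal_integral_eq_lintegral_ofReal (expIntOn ht)]
  exact Filter.Eventually.of_forall fun z => (Real.exp_pos _).le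

-- interval integral of exp
lemma expIntv {z : ℝ} (hz : 0 < z) (c d : ℝ) :
    ∫ t in c..d, Real.exp (-z * t) = (Real.exp (-z * c) - Real.exp (-z * d)) / z := by
  have key : ∀ t : ℝ, HasDerivAt (fun t => -Real.exp (-z * t) / z) (Real.exp (-z * t)) t := by
    intro t
    have h1 : HasDerivAt (fun t : ℝ => -z * t) (-z) t := by
      simpa using (hasDerivAt_id t).const_mul (-z)
    have h2 := (Real.hasDerivAt_exp (-z * t)).comp t h1
    have h3 := ((h2.neg).div_const z)
    convert h3 using 1
    all_goals first | rfl | rw [mul_neg, neg_neg, mul_div_assoc, div_self hz.ne', mul_one]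
  rw [intervalIntegral.integral_eq_sub_of_hasDerivAt (fun t _ => key t)
    ((Real.continuous_exp.comp (continuous_const.mul continuous_id)).intervalIntegrable c d)]
  ring

-- Frullani
lemma frullani {a c : ℝ} (ha : 0 ≤ a) (hc : 0 < c) :
    ∫⁻ z in Set.Ioi (0:ℝ),
        ENNReal.ofReal ((Real.exp (-z * c) - Real.exp (-z * (a + c))) / z)
      = ENNReal.ofReal (Real.log ((a + c) / c)) := by
  have hcd : c ≤ a + c := by linarith
  have step1 : ∀ z ∈ Set.Ioi (0:ℝ),
      ENNReal.ofReal ((Real.exp (-z * c) - Real.exp (-z * (a + c))) / z)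
        = ∫⁻ t in Set.Ioc c (a + c), ENNReal.ofReal (Real.exp (-z * t)) := by
    intro z hz
    rw [Set.mem_Ioi] at hz
    have h1 : (Real.exp (-z * c) - Real.exp (-z * (a + c))) / z
        = ∫ t in Set.Ioc c (a + c), Real.exp (-z * t) := by
      rw [← intervalIntegral.integral_of_le hcd, expIntv hz]
    rw [h1, ofReal_integral_eq_lintegral_ofReal]
    · exact ((Real.continuous_exp.comp (continuous_const.mul continuous_id)).integrableOn_Ioc)
    · exact Filter.Eventually.of_forall fun t => (Real.exp_pos _).le
  rw [setLIntegral_congr_fun measurableSet_Ioi step1]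
  rw [lintegral_lintegral_swap]
  · have step2 : ∀ t ∈ Set.Ioc c (a + c),
        ∫⁻ z in Set.Ioi (0:ℝ), ENNReal.ofReal (Real.exp (-z * t)) = ENNReal.ofReal t⁻¹ :=
      fun t ht => expLInt (lt_of_lt_of_le hc ht.1.le)
    rw [setLIntegral_congr_fun measurableSet_Ioc step2]
    have hinv : IntegrableOn (fun t : ℝ => t⁻¹) (Set.Ioc c (a + c)) := by
      apply (ContinuousOn.integrableOn_Icc ?_).mono_set Set.Ioc_subset_Icc_self
      exact continuousOn_inv₀.mono (fun x hx => ne_of_gt (lt_of_lt_of_le hc hx.1))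
    rw [← ofReal_integral_eq_lintegral_ofReal hinv
      ((ae_restrict_iff' measurableSet_Ioc).2 (Filter.Eventually.of_forall
        fun t ht => inv_nonneg.2 (le_of_lt (lt_of_lt_of_le hc ht.1.le))))]
    congr 1
    rw [← intervalIntegral.integral_of_le hcd, integral_inv_of_pos hc (by linarith)]
  · apply Measurable.aemeasurable
    exact ENNReal.measurable_ofReal.comp
      ((measurable_fst.neg.mul measurable_snd).exp)

lemma pointwise {a b : ℝ} (ha : 0 ≤ a) (hb : 0 ≤ b) :
    ∫⁻ z in Set.Ioi (0:ℝ),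
        ENNReal.ofReal ((Real.exp (-z) / z) * (1 - Real.exp (-z * a)) * Real.exp (-z * b))
      = ENNReal.ofReal (Real.log (1 + a / (b + 1))) := by
  have hc : (0:ℝ) < b + 1 := by linarith
  have heq : ∀ z ∈ Set.Ioi (0:ℝ),
      ENNReal.ofReal ((Real.exp (-z) / z) * (1 - Real.exp (-z * a)) * Real.exp (-z * b))
        = ENNReal.ofReal ((Real.exp (-z * (b + 1)) - Real.exp (-z * (a + (b + 1)))) / z) := by
    intro z hz
    congr 1
    rw [show -z * (b + 1) = -z * b + -z by ring, show -z * (a + (b + 1)) = -z * a + (-z * b + -z) by ring,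
      Real.exp_add, Real.exp_add]
    rw [Real.exp_add]
    field_simp
  rw [setLIntegral_congr_fun measurableSet_Ioi heq,
    frullani ha hc]
  congr 2
  field_simp
  ring

theorem stmt9 {Ω : Type*} [MeasurableSpace Ω] (μ : Measure Ω) [IsProbabilityMeasure μ]
    (X Y : Ω → ℝ) (hX : Measurable X) (hY : Measurable Y)
    (hX0 : ∀ ω, 0 ≤ X ω) (hY0 : ∀ ω, 0 ≤ Y ω)
    (hind : IndepFun X Y μ)
    (hint : Integrable (fun ω => Real.log (1 + X ω / (Y ω + 1))) μ) :
    (∫ ω, Real.log (1 + X ω / (Y ω + 1)) ∂μ) =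
      ∫ z in Set.Ioi (0:ℝ),
        (Real.exp (-z) / z) * (1 - ∫ ω, Real.exp (-z * X ω) ∂μ) *
          ∫ ω, Real.exp (-z * Y ω) ∂μ := by
  -- helpers
  have hexpM : ∀ (z : ℝ) (W : Ω → ℝ), Measurable W →
      Measurable fun ω => Real.exp (-z * W ω) :=
    fun z W hW => ((hW.const_mul (-z)).exp).comp measurable_id |>.comp measurable_id
  have hexpLe1 : ∀ (z : ℝ), 0 ≤ z → ∀ (W : Ω → ℝ), (∀ ω, 0 ≤ W ω) →
      ∀ ω, Real.exp (-z * W ω) ≤ 1 := by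
    intro z hz W hW0 ω
    rw [Real.exp_le_one_iff]  -- maybe name issue
    nlinarith [hW0 ω]
  have hexpInt : ∀ (z : ℝ), 0 ≤ z → ∀ (W : Ω → ℝ), Measurable W → (∀ ω, 0 ≤ W ω) →
      Integrable (fun ω => Real.exp (-z * W ω)) μ := by
    intro z hz W hW hW0
    refine Integrable.mono' (integrable_const 1) (hexpM z W hW).aestronglyMeasurable
      (Filter.Eventually.of_forall fun ω => ?_)
    rw [Real.norm_eq_abs, abs_of_pos (Real.exp_pos _)]
    exact hexpLe1 z hz W hW0 ω
  have hEle1 : ∀ z : ℝ, 0 ≤ z → (∫ ω, Real.exp (-z * X ω) ∂μ) ≤ 1 := by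
    intro z hz
    calc (∫ ω, Real.exp (-z * X ω) ∂μ) ≤ ∫ _ω, (1:ℝ) ∂μ :=
          integral_mono (hexpInt z hz X hX hX0) (integrable_const 1) (hexpLe1 z hz X hX0)
      _ = 1 := by simp
  have hEY0 : ∀ z : ℝ, 0 ≤ ∫ ω, Real.exp (-z * Y ω) ∂μ :=
    fun z => integral_nonneg fun ω => (Real.exp_pos _).le
  -- per-z identity
  have key : ∀ z ∈ Set.Ioi (0:ℝ),
      (∫⁻ ω, ENNReal.ofReal
          ((Real.exp (-z) / z) * (1 - Real.exp (-z * X ω)) * Real.exp (-z * Y ω)) ∂μ)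
        = ENNReal.ofReal ((Real.exp (-z) / z) * (1 - ∫ ω, Real.exp (-z * X ω) ∂μ) *
            ∫ ω, Real.exp (-z * Y ω) ∂μ) := by
    intro z hz
    rw [Set.mem_Ioi] at hz
    have hIX := hexpInt z hz.le X hX hX0
    have hIY := hexpInt z hz.le Y hY hY0
    have hIXY : Integrable (fun ω => Real.exp (-z * X ω) * Real.exp (-z * Y ω)) μ := by
      refine Integrable.mono' hIY ((hexpM z X hX).mul (hexpM z Y hY)).aestronglyMeasurable
        (Filter.Eventually.of_forall fun ω => ?_)
      rw [Real.norm_eq_abs, abs_of_pos (mul_pos (Real.exp_pos _) (Real.exp_pos _))]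
      exact mul_le_of_le_one_left (Real.exp_pos _).le (hexpLe1 z hz.le X hX0 ω)
    have hg_eq : (fun ω => (Real.exp (-z) / z) * (1 - Real.exp (-z * X ω)) * Real.exp (-z * Y ω))
        = fun ω => (Real.exp (-z) / z) *
            (Real.exp (-z * Y ω) - Real.exp (-z * X ω) * Real.exp (-z * Y ω)) := by
      funext ω; ring
    have hG : Integrable (fun ω =>
        (Real.exp (-z) / z) * (1 - Real.exp (-z * X ω)) * Real.exp (-z * Y ω)) μ := by
      rw [hg_eq]; exact (hIY.sub hIXY).const_mul _
    rw [← ofReal_integral_eq_lintegral_ofReal hG (Filter.Eventually.of_forall fun ω =>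
      mul_nonneg (mul_nonneg (div_nonneg (Real.exp_pos _).le hz.le)
        (sub_nonneg.2 (hexpLe1 z hz.le X hX0 ω))) (Real.exp_pos _).le)]
    congr 1
    have hmul : (∫ ω, Real.exp (-z * X ω) * Real.exp (-z * Y ω) ∂μ)
        = (∫ ω, Real.exp (-z * X ω) ∂μ) * ∫ ω, Real.exp (-z * Y ω) ∂μ := by
      have hc : IndepFun (fun ω => Real.exp (-z * X ω)) (fun ω => Real.exp (-z * Y ω)) μ := (hind.comp (φ := fun x : ℝ => Real.exp (-z * x))
        (ψ := fun x : ℝ => Real.exp (-z * x))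
        ((measurable_id.const_mul (-z)).exp) ((measurable_id.const_mul (-z)).exp))
      have := hc.integral_mul_eq_mul_integral hIX.aestronglyMeasurable hIY.aestronglyMeasurable
      simpa [Function.comp, Pi.mul_apply] using this
    rw [hg_eq, MeasureTheory.integral_const_mul, integral_sub hIY hIXY, hmul]
    ring
  -- measurability of the RHS integrand
  have hIXm : Measurable fun z : ℝ => ∫ ω, Real.exp (-z * X ω) ∂μ := by
    have : StronglyMeasurable (Function.uncurry fun (z : ℝ) (ω : Ω) => Real.exp (-z * X ω)) :=
      ((measurable_fst.neg.mul (hX.comp measurable_snd)).exp).stronglyMeasurable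
    exact (StronglyMeasurable.integral_prod_right this).measurable
  have hIYm : Measurable fun z : ℝ => ∫ ω, Real.exp (-z * Y ω) ∂μ := by
    have : StronglyMeasurable (Function.uncurry fun (z : ℝ) (ω : Ω) => Real.exp (-z * Y ω)) :=
      ((measurable_fst.neg.mul (hY.comp measurable_snd)).exp).stronglyMeasurable
    exact (StronglyMeasurable.integral_prod_right this).measurable
  have hhm : Measurable fun z : ℝ =>
      (Real.exp (-z) / z) * (1 - ∫ ω, Real.exp (-z * X ω) ∂μ) *
        ∫ ω, Real.exp (-z * Y ω) ∂μ :=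
    ((measurable_id.neg.exp.div measurable_id).mul (measurable_const.sub hIXm)).mul hIYm
  -- assemble
  have hlog0 : ∀ ω, 0 ≤ Real.log (1 + X ω / (Y ω + 1)) := by
    intro ω
    refine Real.log_nonneg ?_
    have h1 : (0:ℝ) ≤ X ω / (Y ω + 1) := div_nonneg (hX0 ω) (by linarith [hY0 ω])
    linarith
  rw [integral_eq_lintegral_of_nonneg_ae (Filter.Eventually.of_forall hlog0)
    hint.aestronglyMeasurable]
  rw [integral_eq_lintegral_of_nonneg_ae
    ((ae_restrict_iff' measurableSet_Ioi).2 (Filter.Eventually.of_forall fun z hz =>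
      mul_nonneg (mul_nonneg (div_nonneg (Real.exp_pos _).le (le_of_lt hz))
        (sub_nonneg.2 (hEle1 z (le_of_lt hz)))) (hEY0 z)))
    hhm.aestronglyMeasurable]
  congr 1
  calc (∫⁻ ω, ENNReal.ofReal (Real.log (1 + X ω / (Y ω + 1))) ∂μ)
      = ∫⁻ ω, (∫⁻ z in Set.Ioi (0:ℝ), ENNReal.ofReal
          ((Real.exp (-z) / z) * (1 - Real.exp (-z * X ω)) * Real.exp (-z * Y ω))) ∂μ :=
        lintegral_congr fun ω => (pointwise (hX0 ω) (hY0 ω)).symm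
    _ = ∫⁻ z in Set.Ioi (0:ℝ), (∫⁻ ω, ENNReal.ofReal
          ((Real.exp (-z) / z) * (1 - Real.exp (-z * X ω)) * Real.exp (-z * Y ω)) ∂μ) := by
        apply lintegral_lintegral_swap
        apply Measurable.aemeasurable
        exact ENNReal.measurable_ofReal.comp
          (((measurable_snd.neg.exp.div measurable_snd).mul
            (measurable_const.sub ((measurable_snd.neg.mul (hX.comp measurable_fst)).exp))).mul
            ((measurable_snd.neg.mul (hY.comp measurable_fst)).exp))
    _ = ∫⁻ z in Set.Ioi (0:ℝ), ENNReal.ofReal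
          ((Real.exp (-z) / z) * (1 - ∫ ω, Real.exp (-z * X ω) ∂μ) *
            ∫ ω, Real.exp (-z * Y ω) ∂μ) :=
        setLIntegral_congr_fun measurableSet_Ioi key
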